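/- Let G be a finite connected simple graph on n vertices that is regular of degree r ≥ 2. Then for any starting vertices u (cop) and v (robber) in the cop-and-drunk game on G, there is a cop strategy (the greedy strategy, which at each step minimizes her distance to the robber's current position) whose expected capture time is at most r·diam(G)/2, which is strictly less than 3n/2 (using that an r-regular connected graph on n vertices has diameter at most (3n − r − 3)/(r + 1)). -/

import Mathlib

open scoped Classical ENNReal

/-! ## The cop-and-drunk game

A cop starts at `u`, a robber at `v`.  In each move the cop steps to an adjacent vertex
(seeing everything), then the robber steps to a uniformly random adjacent vertex.
A cop strategy is a function assigning to each finite history of play (equivalently, to the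
finite sequence of robber positions observed so far, which together with the strategy itself
determines the whole history) the cop's next vertex.  Capture occurs the first time the two
players occupy the same vertex, whether after the cop's step or after the robber's step, and
the capture time is the index of that move.  The expected capture time is computed as
`∑_{k≥0} P(T > k)` in `ℝ≥0∞`, where the probability of a robber trajectory is the product of
the transition weights `1/deg` of the simple random walk (so non-walk trajectories get
weight `0`). -/

/-- The cop's position after move `k`, given strategy `σ`, starting vertex `u`, and the
robber's trajectory `r` (the strategy sees the history `r 0, …, r (k-1)`). -/
def copPos {V : Type} (σ : List V → V) (u : V) (r : ℕ → V) : ℕ → V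
  | 0 => u
  | k + 1 => σ (List.ofFn fun i : Fin (k + 1) => r i)

/-- A strategy is valid for `G` if the cop always moves from her current vertex to an
adjacent vertex. -/
def ValidStrategy {V : Type} (G : SimpleGraph V) (σ : List V → V) (u : V) : Prop :=
  ∀ (r : ℕ → V) (k : ℕ), G.Adj (copPos σ u r k) (copPos σ u r (k + 1))

/-- The robber following trajectory `r` has been captured by the end of move `k`
(including capture at time `0` in case the two players start on the same vertex):
at some move `j ≤ k`, either the cop stepped onto the robber's current vertex, or the
robber stepped onto the cop's vertex. -/
def CapturedBy {V : Type} (σ : List V → V) (u : V) (r : ℕ → V) (k : ℕ) : Prop :=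
  r 0 = u ∨ ∃ j, 1 ≤ j ∧ j ≤ k ∧ (copPos σ u r j = r (j - 1) ∨ copPos σ u r j = r j)

/-- Probability weight of the first `k` steps of the trajectory `r` for the simple random
walk on `G`: the product of `1/deg` over the steps, and `0` if some step is not an edge. -/
noncomputable def pathWt {V : Type} [Fintype V] (G : SimpleGraph V) (r : ℕ → V) (k : ℕ) :
    ℝ≥0∞ :=
  ∏ i ∈ Finset.range k, if G.Adj (r i) (r (i + 1)) then ((G.degree (r i) : ℝ≥0∞))⁻¹ else 0

/-- Extend a finite trajectory to an infinite one (constant after time `k`). -/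
def pad {V : Type} (k : ℕ) (q : Fin (k + 1) → V) : ℕ → V :=
  fun i => q ⟨min i k, Nat.lt_succ_of_le (Nat.min_le_right i k)⟩

/-- The probability that the robber, starting at `v` and performing a simple random walk on
`G`, survives (is not yet captured) through the end of move `k`, against the cop playing
strategy `σ` from `u`. -/
noncomputable def survival {V : Type} [Fintype V] (G : SimpleGraph V) (σ : List V → V)
    (u v : V) (k : ℕ) : ℝ≥0∞ :=
  ∑ q : Fin (k + 1) → V,
    if q 0 = v ∧ ¬ CapturedBy σ u (pad k q) k then pathWt G (pad k q) k else 0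

/-- The expected capture time `E[T] = ∑_{k ≥ 0} P(T > k)` of the cop-and-drunk game on `G`,
with the cop starting at `u` playing strategy `σ` and the robber starting at `v`. -/
noncomputable def expCaptureTime {V : Type} [Fintype V] (G : SimpleGraph V) (σ : List V → V)
    (u v : V) : ℝ≥0∞ :=
  ∑' k : ℕ, survival G σ u v k

set_option linter.unusedSectionVars false
namespace CopDrunk
open SimpleGraph Finset
variable {V : Type} [Fintype V]

noncomputable def gstep (G : SimpleGraph V) (a b : V) : V :=
  if h : ∃ c, G.Adj a c ∧ G.dist c b + 1 = G.dist a b then h.choose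
  else if h2 : ∃ c, G.Adj a c then h2.choose else a

lemma exists_adj_dist_succ (G : SimpleGraph V) (h : G.Connected) {a b : V} (hab : a ≠ b) :
    ∃ c, G.Adj a c ∧ G.dist c b + 1 = G.dist a b := by
  obtain ⟨p, hp⟩ := (h a b).exists_walk_length_eq_dist
  cases p with
  | nil => exact absurd rfl hab
  | @cons _ c _ hadj q =>
    refine ⟨c, hadj, ?_⟩
    have h1 : G.dist c b ≤ q.length := SimpleGraph.dist_le q
    have h2 : G.dist a c ≤ 1 := by
      simpa using SimpleGraph.dist_le (SimpleGraph.Walk.cons hadj SimpleGraph.Walk.nil)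
    have h3 : G.dist a b ≤ G.dist a c + G.dist c b := h.dist_triangle
    simp only [SimpleGraph.Walk.length_cons] at hp
    omega

lemma gstep_spec (G : SimpleGraph V) (h : G.Connected) {a b : V} (hab : a ≠ b) :
    G.Adj a (gstep G a b) ∧ G.dist (gstep G a b) b + 1 = G.dist a b := by
  have he := exists_adj_dist_succ G h hab
  rw [gstep, dif_pos he]
  exact he.choose_spec

lemma gstep_adj (G : SimpleGraph V) (hne : ∀ x : V, ∃ y, G.Adj x y) (a b : V) :
    G.Adj a (gstep G a b) := by
  rw [gstep]
  split_ifs with h1 h2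
  · exact h1.choose_spec.1
  · exact h2.choose_spec
  · exact absurd (hne a) h2

noncomputable def gcop (G : SimpleGraph V) (u : V) : List V → V
  | [] => u
  | x :: l => gstep G (gcop G u l) x

noncomputable def greedy (G : SimpleGraph V) (u : V) : List V → V :=
  fun l => gcop G u l.reverse

lemma copPos_greedy (G : SimpleGraph V) (u : V) (r : ℕ → V) (k : ℕ) :
    copPos (greedy G u) u r (k + 1) = gstep G (copPos (greedy G u) u r k) (r k) := by
  cases k with
  | zero =>
    show greedy G u (List.ofFn fun i : Fin 1 => r i) = gstep G u (r 0)
    simp [greedy, List.ofFn_succ, gcop]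
  | succ m =>
    show greedy G u (List.ofFn fun i : Fin (m + 2) => r i)
        = gstep G (greedy G u (List.ofFn fun i : Fin (m + 1) => r i)) (r (m + 1))
    have h : (List.ofFn fun i : Fin (m + 2) => r i)
        = (List.ofFn fun i : Fin (m + 1) => r (i : ℕ)).concat (r (m + 1)) := by
      rw [List.ofFn_succ']
      rfl
    rw [greedy, h]
    simp only [List.concat_eq_append, List.reverse_append, List.reverse_cons, List.reverse_nil,
      List.nil_append, List.singleton_append]
    rfl

lemma copPos_congr {σ : List V → V} {u : V} {r₁ r₂ : ℕ → V} {j : ℕ}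
    (h : ∀ i < j, r₁ i = r₂ i) : copPos σ u r₁ j = copPos σ u r₂ j := by
  cases j with
  | zero => rfl
  | succ k =>
    show σ _ = σ _
    have : (fun i : Fin (k + 1) => r₁ i) = fun i : Fin (k + 1) => r₂ i :=
      funext fun i => h i i.isLt
    rw [this]


lemma capturedBy_imp {σ : List V → V} {u : V} {k : ℕ} {r₁ r₂ : ℕ → V}
    (h : ∀ i ≤ k, r₁ i = r₂ i) (hc : CapturedBy σ u r₁ k) : CapturedBy σ u r₂ k := by
  rcases hc with h0 | ⟨j, hj1, hjk, hcap⟩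
  · exact Or.inl ((h 0 (Nat.zero_le k)).symm.trans h0)
  · refine Or.inr ⟨j, hj1, hjk, ?_⟩
    have hcop : copPos σ u r₁ j = copPos σ u r₂ j :=
      copPos_congr fun i hi => h i (le_of_lt (lt_of_lt_of_le hi hjk))
    rcases hcap with h1 | h1
    · exact Or.inl (hcop.symm.trans (h1.trans (h (j - 1) (le_trans (Nat.sub_le j 1) hjk))))
    · exact Or.inr (hcop.symm.trans (h1.trans (h j hjk)))

lemma capturedBy_congr {σ : List V → V} {u : V} {k : ℕ} {r₁ r₂ : ℕ → V}
    (h : ∀ i ≤ k, r₁ i = r₂ i) : CapturedBy σ u r₁ k ↔ CapturedBy σ u r₂ k :=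
  ⟨capturedBy_imp h, capturedBy_imp fun i hi => (h i hi).symm⟩

lemma capturedBy_succ_iff {σ : List V → V} {u : V} {r : ℕ → V} {k : ℕ} :
    CapturedBy σ u r (k + 1) ↔ CapturedBy σ u r k ∨
      copPos σ u r (k + 1) = r k ∨ copPos σ u r (k + 1) = r (k + 1) := by
  constructor
  · rintro (h0 | ⟨j, hj1, hjk, hcap⟩)
    · exact Or.inl (Or.inl h0)
    · rcases Nat.lt_or_ge j (k + 1) with hj | hj
      · exact Or.inl (Or.inr ⟨j, hj1, Nat.lt_succ_iff.mp hj, hcap⟩)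
      · have hjeq : j = k + 1 := le_antisymm hjk hj
        subst hjeq
        simpa using Or.inr hcap
  · rintro ((h0 | ⟨j, hj1, hjk, hcap⟩) | hcap)
    · exact Or.inl h0
    · exact Or.inr ⟨j, hj1, le_trans hjk (Nat.le_succ k), hcap⟩
    · exact Or.inr ⟨k + 1, Nat.succ_le_succ (Nat.zero_le k), le_refl _, by simpa using hcap⟩

lemma ne_of_not_captured {σ : List V → V} {u : V} {r : ℕ → V} {k : ℕ}
    (h : ¬ CapturedBy σ u r k) : copPos σ u r k ≠ r k := by
  intro heq
  apply h
  cases k with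
  | zero => exact Or.inl heq.symm
  | succ m => exact Or.inr ⟨m + 1, Nat.succ_le_succ (Nat.zero_le m), le_refl _, Or.inr heq⟩

lemma pad_le {k : ℕ} (q : Fin (k + 1) → V) {i : ℕ} (h : i ≤ k) :
    pad k q i = q ⟨i, Nat.lt_succ_of_le h⟩ := by
  simp only [pad]
  congr 1
  exact Fin.ext (Nat.min_eq_left h)

lemma pad_snoc_le {k : ℕ} (q' : Fin (k + 1) → V) (x : V) {i : ℕ} (h : i ≤ k) :
    pad (k + 1) (Fin.snoc q' x) i = pad k q' i := by
  rw [pad_le _ (le_trans h (Nat.le_succ k)), pad_le _ h]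
  have : (⟨i, Nat.lt_succ_of_le (le_trans h (Nat.le_succ k))⟩ : Fin (k + 2))
      = Fin.castSucc ⟨i, Nat.lt_succ_of_le h⟩ := rfl
  rw [this, Fin.snoc_castSucc]

lemma pad_snoc_last {k : ℕ} (q' : Fin (k + 1) → V) (x : V) :
    pad (k + 1) (Fin.snoc q' x) (k + 1) = x := by
  rw [pad_le _ (le_refl (k + 1))]
  have : (⟨k + 1, Nat.lt_succ_of_le (le_refl (k + 1))⟩ : Fin (k + 2)) = Fin.last (k + 1) := rfl
  rw [this, Fin.snoc_last]


lemma sum_snoc {k : ℕ} (F : (Fin (k + 2) → V) → ℝ≥0∞) :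
    ∑ q : Fin (k + 2) → V, F q = ∑ q' : Fin (k + 1) → V, ∑ x : V, F (Fin.snoc q' x) := by
  rw [← (Fin.snocEquiv (fun _ => V)).sum_comp F, Fintype.sum_prod_type, Finset.sum_comm]
  rfl

lemma pathWt_snoc (G : SimpleGraph V) {k : ℕ} (q' : Fin (k + 1) → V) (x : V) :
    pathWt G (pad (k + 1) (Fin.snoc q' x)) (k + 1) = pathWt G (pad k q') k *
      (if G.Adj (pad k q' k) x then ((G.degree (pad k q' k) : ℝ≥0∞))⁻¹ else 0) := by
  rw [pathWt, pathWt, Finset.prod_range_succ]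
  congr 1
  · refine Finset.prod_congr rfl fun i hi => ?_
    rw [Finset.mem_range] at hi
    rw [pad_snoc_le _ _ (le_of_lt hi), pad_snoc_le _ _ (Nat.succ_le_of_lt hi)]
  · rw [pad_snoc_le _ _ (le_refl k), pad_snoc_last]

lemma snoc_zero' {k : ℕ} (q' : Fin (k + 1) → V) (x : V) :
    (Fin.snoc q' x : Fin (k + 2) → V) 0 = q' 0 := by
  have : (0 : Fin (k + 2)) = Fin.castSucc (0 : Fin (k + 1)) := rfl
  rw [this, Fin.snoc_castSucc]


noncomputable def phi (G : SimpleGraph V) (σ : List V → V) (u v : V) (k : ℕ) : ℝ≥0∞ :=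
  ∑ q : Fin (k + 1) → V,
    if q 0 = v ∧ ¬ CapturedBy σ u (pad k q) k then
      pathWt G (pad k q) k * (G.dist (copPos σ u (pad k q) k) (pad k q k) : ℝ≥0∞) else 0

section succ
variable (G : SimpleGraph V) (σ : List V → V) (u v : V) (k : ℕ)

lemma snoc_facts (q' : Fin (k + 1) → V) (x : V) :
    ((Fin.snoc q' x : Fin (k + 2) → V) 0 = v ∧
      ¬ CapturedBy σ u (pad (k + 1) (Fin.snoc q' x)) (k + 1)) ↔
    (q' 0 = v ∧ ¬ CapturedBy σ u (pad k q') k ∧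
      ¬ (copPos σ u (pad k q') (k + 1) = pad k q' k ∨
         copPos σ u (pad k q') (k + 1) = x)) := by
  have hpad : ∀ i ≤ k, pad (k + 1) (Fin.snoc q' x) i = pad k q' i :=
    fun i h => pad_snoc_le q' x h
  have hcop : copPos σ u (pad (k + 1) (Fin.snoc q' x)) (k + 1) = copPos σ u (pad k q') (k + 1) :=
    copPos_congr fun i hi => hpad i (Nat.lt_succ_iff.mp hi)
  have hcap : CapturedBy σ u (pad (k + 1) (Fin.snoc q' x)) (k + 1) ↔
      (CapturedBy σ u (pad k q') k ∨
        (copPos σ u (pad k q') (k + 1) = pad k q' k ∨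
         copPos σ u (pad k q') (k + 1) = x)) := by
    rw [capturedBy_succ_iff, capturedBy_congr hpad, hcop, hpad k (le_refl k), pad_snoc_last]
  rw [snoc_zero', hcap]
  tauto

lemma survival_succ :
    survival G σ u v (k + 1) = ∑ q' : Fin (k + 1) → V, ∑ x : V,
      if q' 0 = v ∧ ¬ CapturedBy σ u (pad k q') k ∧
          ¬ (copPos σ u (pad k q') (k + 1) = pad k q' k ∨
             copPos σ u (pad k q') (k + 1) = x) then
        pathWt G (pad k q') k *
          (if G.Adj (pad k q' k) x then ((G.degree (pad k q' k) : ℝ≥0∞))⁻¹ else 0)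
      else 0 := by
  rw [survival, sum_snoc]
  refine Finset.sum_congr rfl fun q' _ => Finset.sum_congr rfl fun x _ => ?_
  exact if_congr (snoc_facts σ u v k q' x) (pathWt_snoc G q' x) rfl

lemma phi_succ :
    phi G σ u v (k + 1) = ∑ q' : Fin (k + 1) → V, ∑ x : V,
      if q' 0 = v ∧ ¬ CapturedBy σ u (pad k q') k ∧
          ¬ (copPos σ u (pad k q') (k + 1) = pad k q' k ∨
             copPos σ u (pad k q') (k + 1) = x) then
        pathWt G (pad k q') k *
          (if G.Adj (pad k q' k) x then ((G.degree (pad k q' k) : ℝ≥0∞))⁻¹ else 0) *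
          (G.dist (copPos σ u (pad k q') (k + 1)) x : ℝ≥0∞)
      else 0 := by
  rw [phi, sum_snoc]
  refine Finset.sum_congr rfl fun q' _ => Finset.sum_congr rfl fun x _ => ?_
  have hpad : ∀ i ≤ k, pad (k + 1) (Fin.snoc q' x) i = pad k q' i :=
    fun i h => pad_snoc_le q' x h
  have hcop : copPos σ u (pad (k + 1) (Fin.snoc q' x)) (k + 1) = copPos σ u (pad k q') (k + 1) :=
    copPos_congr fun i hi => hpad i (Nat.lt_succ_iff.mp hi)
  refine if_congr (snoc_facts σ u v k q' x) ?_ rfl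
  rw [pathWt_snoc G q' x, hcop, pad_snoc_last]

end succ

lemma key_nat (G : SimpleGraph V) (hconn : G.Connected) {r : ℕ} (hreg : G.IsRegularOfDegree r)
    (hr : 2 ≤ r) {cop a c : V} (h2 : G.dist c a + 1 = G.dist cop a) (hca : c ≠ a) :
    (∑ x ∈ (G.neighborFinset a).erase c, G.dist c x) + 2 ≤ r * G.dist cop a := by
  have hca1 : 1 ≤ G.dist c a := hconn.pos_dist_of_ne hca
  have hbound : ∀ x ∈ (G.neighborFinset a).erase c, G.dist c x ≤ G.dist c a + 1 := by
    intro x hx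
    have hadj : G.Adj a x := (SimpleGraph.mem_neighborFinset _ _ _).mp (Finset.mem_of_mem_erase hx)
    have h1 : G.dist a x = 1 := SimpleGraph.dist_eq_one_iff_adj.mpr hadj
    calc G.dist c x ≤ G.dist c a + G.dist a x := hconn.dist_triangle
      _ = G.dist c a + 1 := by rw [h1]
  obtain ⟨hadj0, hd0⟩ := gstep_spec G hconn (Ne.symm hca)
  set x₀ := gstep G a c with hx₀def
  have hcomm : G.dist a c = G.dist c a := SimpleGraph.dist_comm
  have hcard : (G.neighborFinset a).card = r := hreg a
  by_cases hx0 : x₀ = c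
  · have h1 : G.dist c a = 1 := by
      rw [← hcomm, ← hd0, hx0, SimpleGraph.dist_self]
    have hmem : c ∈ G.neighborFinset a := by
      rw [← hx0]; exact (SimpleGraph.mem_neighborFinset _ _ _).mpr hadj0
    have hcarde : ((G.neighborFinset a).erase c).card = r - 1 := by
      rw [Finset.card_erase_of_mem hmem, hcard]
    have hsum : ∑ x ∈ (G.neighborFinset a).erase c, G.dist c x
        ≤ ((G.neighborFinset a).erase c).card * 2 :=
      Finset.sum_le_card_nsmul _ _ 2 (fun x hx => by have := hbound x hx; omega)
    rw [hcarde] at hsum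
    have hd2 : G.dist cop a = 2 := by omega
    rw [hd2]
    have hr1 : 1 ≤ r := by omega
    omega
  · have hmem0 : x₀ ∈ (G.neighborFinset a).erase c :=
      Finset.mem_erase.mpr ⟨hx0, (SimpleGraph.mem_neighborFinset _ _ _).mpr hadj0⟩
    have hsplit : (∑ x ∈ (G.neighborFinset a).erase c, G.dist c x)
        = G.dist c x₀ + ∑ x ∈ ((G.neighborFinset a).erase c).erase x₀, G.dist c x :=
      (Finset.add_sum_erase _ _ hmem0).symm
    have hx0d : G.dist c x₀ + 2 = G.dist cop a := by
      have : G.dist c x₀ = G.dist x₀ c := SimpleGraph.dist_comm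
      omega
    have hcard2 : (((G.neighborFinset a).erase c).erase x₀).card ≤ r - 1 := by
      have hsub : ((G.neighborFinset a).erase c).erase x₀ ⊆ (G.neighborFinset a).erase x₀ :=
        Finset.erase_subset_erase x₀ (Finset.erase_subset c _)
      have : ((G.neighborFinset a).erase x₀).card = r - 1 := by
        rw [Finset.card_erase_of_mem (Finset.mem_erase.mp hmem0).2, hcard]
      rw [← this]
      exact Finset.card_le_card hsub
    have hda : G.dist c a + 1 = G.dist cop a := h2
    have hrest : ∑ x ∈ ((G.neighborFinset a).erase c).erase x₀, G.dist c x
        ≤ (r - 1) * G.dist cop a := by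
      calc ∑ x ∈ ((G.neighborFinset a).erase c).erase x₀, G.dist c x
          ≤ (((G.neighborFinset a).erase c).erase x₀).card * (G.dist c a + 1) :=
            Finset.sum_le_card_nsmul _ _ _
              (fun x hx => hbound x (Finset.mem_of_mem_erase hx))
        _ ≤ (r - 1) * (G.dist c a + 1) := Nat.mul_le_mul_right _ hcard2
        _ = (r - 1) * G.dist cop a := by rw [hda]
    calc (∑ x ∈ (G.neighborFinset a).erase c, G.dist c x) + 2
        = G.dist cop a + ∑ x ∈ ((G.neighborFinset a).erase c).erase x₀, G.dist c x := by
          rw [hsplit]; omega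
      _ ≤ G.dist cop a + (r - 1) * G.dist cop a := Nat.add_le_add_left hrest _
      _ = 1 * G.dist cop a + (r - 1) * G.dist cop a := by rw [one_mul]
      _ = (1 + (r - 1)) * G.dist cop a := (Nat.add_mul _ _ _).symm
      _ = r * G.dist cop a := by rw [show 1 + (r - 1) = r by omega]


lemma drift (G : SimpleGraph V) (hconn : G.Connected) {r : ℕ}
    (hreg : G.IsRegularOfDegree r) (hr : 2 ≤ r) (u v : V) (k : ℕ) :
    (r : ℝ≥0∞) * phi G (greedy G u) u v (k + 1) + 2 * survival G (greedy G u) u v k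
      ≤ (r : ℝ≥0∞) * phi G (greedy G u) u v k := by
  set σ := greedy G u with hσ
  rw [phi_succ, survival, phi, Finset.mul_sum, Finset.mul_sum, Finset.mul_sum,
    ← Finset.sum_add_distrib]
  refine Finset.sum_le_sum fun q' _ => ?_
  by_cases hq : q' 0 = v ∧ ¬ CapturedBy σ u (pad k q') k
  · obtain ⟨hq0, hcap⟩ := hq
    set W := pathWt G (pad k q') k with hW
    set a := pad k q' k with ha
    set cop := copPos σ u (pad k q') k with hcopdef
    have hne : cop ≠ a := ne_of_not_captured hcap
    set d := G.dist cop a with hd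
    have hd1 : 1 ≤ d := hconn.pos_dist_of_ne hne
    have hcop1 : copPos σ u (pad k q') (k + 1) = gstep G cop a := copPos_greedy G u (pad k q') k
    obtain ⟨hadjc, hdc⟩ := gstep_spec G hconn hne
    set c := gstep G cop a with hc
    rw [if_pos (⟨hq0, hcap⟩ : _ ∧ _), if_pos (⟨hq0, hcap⟩ : _ ∧ _)]
    have hrd2 : (2 : ℝ≥0∞) ≤ (r : ℝ≥0∞) * (d : ℝ≥0∞) := by
      have : (2 : ℕ) ≤ r * d := le_trans hr (Nat.le_mul_of_pos_right r hd1)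
      exact_mod_cast this
    by_cases hca : c = a
    · have hz : ∀ x : V,
          (if q' 0 = v ∧ ¬ CapturedBy σ u (pad k q') k ∧
              ¬ (copPos σ u (pad k q') (k + 1) = a ∨
                 copPos σ u (pad k q') (k + 1) = x) then
            W * (if G.Adj a x then ((G.degree a : ℝ≥0∞))⁻¹ else 0) *
              (G.dist (copPos σ u (pad k q') (k + 1)) x : ℝ≥0∞)
          else 0) = 0 := by
        intro x
        refine if_neg fun h => ?_
        exact h.2.2 (Or.inl (by rw [hcop1]; exact hca))
      simp only [hz, Finset.sum_const_zero, mul_zero, zero_add]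
      calc (2 : ℝ≥0∞) * W ≤ ((r : ℝ≥0∞) * d) * W := mul_le_mul_left hrd2 W
        _ = (r : ℝ≥0∞) * (W * d) := by ring
    · -- c ≠ a
      have hterm : ∀ x : V,
          (if q' 0 = v ∧ ¬ CapturedBy σ u (pad k q') k ∧
              ¬ (copPos σ u (pad k q') (k + 1) = pad k q' k ∨
                 copPos σ u (pad k q') (k + 1) = x) then
            W * (if G.Adj a x then ((G.degree a : ℝ≥0∞))⁻¹ else 0) *
              (G.dist (copPos σ u (pad k q') (k + 1)) x : ℝ≥0∞)
          else 0)
          = (if x ∈ (G.neighborFinset a).erase c then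
              W * (r : ℝ≥0∞)⁻¹ * (G.dist c x : ℝ≥0∞) else 0) := by
        intro x
        rw [hcop1]
        by_cases hx : x ∈ (G.neighborFinset a).erase c
        · obtain ⟨hxc, hxadj⟩ := Finset.mem_erase.mp hx
          rw [if_pos hx, if_pos ⟨hq0, hcap, fun h => h.elim hca fun h' => hxc h'.symm⟩,
            if_pos ((SimpleGraph.mem_neighborFinset _ _ _).mp hxadj), hreg a]
        · rw [if_neg hx]
          rw [Finset.mem_erase, not_and_or] at hx
          rcases hx with hx | hx
          · push_neg at hx
            subst hx
            exact if_neg fun h => h.2.2 (Or.inr rfl)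
          · have : ¬ G.Adj a x := fun h => hx ((SimpleGraph.mem_neighborFinset _ _ _).mpr h)
            rw [if_neg this]
            split_ifs <;> ring
      rw [Finset.sum_congr rfl fun x _ => hterm x]
      rw [Finset.sum_ite_mem, Finset.univ_inter, ← Finset.mul_sum]
      have hS : ∑ x ∈ (G.neighborFinset a).erase c, (G.dist c x : ℝ≥0∞)
          = ((∑ x ∈ (G.neighborFinset a).erase c, G.dist c x : ℕ) : ℝ≥0∞) := by
        rw [Nat.cast_sum]
      set S : ℕ := ∑ x ∈ (G.neighborFinset a).erase c, G.dist c x with hSdef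
      have hkey : S + 2 ≤ r * d := key_nat G hconn hreg hr hdc hca
      rw [hS]
      have hr0 : (r : ℝ≥0∞) ≠ 0 := by
        simp only [ne_eq, Nat.cast_eq_zero]; omega
      have hrtop : (r : ℝ≥0∞) ≠ ⊤ := ENNReal.natCast_ne_top r
      have hrinv : (r : ℝ≥0∞) * (r : ℝ≥0∞)⁻¹ = 1 := ENNReal.mul_inv_cancel hr0 hrtop
      calc (r : ℝ≥0∞) * (W * (r : ℝ≥0∞)⁻¹ * ((S : ℕ) : ℝ≥0∞)) + 2 * W
          = ((r : ℝ≥0∞) * (r : ℝ≥0∞)⁻¹) * (W * S) + 2 * W := by ring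
        _ = W * ((S : ℝ≥0∞) + 2) := by rw [hrinv]; ring
        _ ≤ W * ((r : ℝ≥0∞) * d) := by
            refine mul_le_mul_right ?_ W
            have : ((S + 2 : ℕ) : ℝ≥0∞) ≤ ((r * d : ℕ) : ℝ≥0∞) := by exact_mod_cast hkey
            push_cast at this
            exact this
        _ = (r : ℝ≥0∞) * (W * d) := by ring
  · have hz : ∀ x : V,
        (if q' 0 = v ∧ ¬ CapturedBy σ u (pad k q') k ∧
            ¬ (copPos σ u (pad k q') (k + 1) = pad k q' k ∨
               copPos σ u (pad k q') (k + 1) = x) then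
          pathWt G (pad k q') k *
            (if G.Adj (pad k q' k) x then ((G.degree (pad k q' k) : ℝ≥0∞))⁻¹ else 0) *
            (G.dist (copPos σ u (pad k q') (k + 1)) x : ℝ≥0∞)
        else 0) = 0 := fun x => if_neg fun h => hq ⟨h.1, h.2.1⟩
    simp only [hz, if_neg hq, Finset.sum_const_zero, mul_zero, zero_add, add_zero, le_refl]


lemma surv_le_phi (G : SimpleGraph V) (hconn : G.Connected) (σ : List V → V) (u v : V) (k : ℕ) :
    survival G σ u v k ≤ phi G σ u v k := by
  rw [survival, phi]
  refine Finset.sum_le_sum fun q _ => ?_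
  by_cases hq : q 0 = v ∧ ¬ CapturedBy σ u (pad k q) k
  · rw [if_pos hq, if_pos hq]
    have hne : copPos σ u (pad k q) k ≠ pad k q k := ne_of_not_captured hq.2
    have h1 : 1 ≤ G.dist (copPos σ u (pad k q) k) (pad k q k) := hconn.pos_dist_of_ne hne
    exact le_mul_of_one_le_right' (by exact_mod_cast h1)
  · rw [if_neg hq, if_neg hq]

lemma phi_zero_le (G : SimpleGraph V) (σ : List V → V) (u v : V) :
    phi G σ u v 0 ≤ (G.dist u v : ℝ≥0∞) := by
  rw [phi]
  have hb : ∀ q : Fin 1 → V,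
      (if q 0 = v ∧ ¬ CapturedBy σ u (pad 0 q) 0 then
        pathWt G (pad 0 q) 0 * (G.dist (copPos σ u (pad 0 q) 0) (pad 0 q 0) : ℝ≥0∞) else 0)
      ≤ (if q = (fun _ => v) then (G.dist u v : ℝ≥0∞) else 0) := by
    intro q
    by_cases hq : q 0 = v ∧ ¬ CapturedBy σ u (pad 0 q) 0
    · have hqe : q = (fun _ => v) := funext fun i => by
        have : i = 0 := Subsingleton.elim i 0
        rw [this, hq.1]
      rw [if_pos hq, if_pos hqe]
      have h1 : pathWt G (pad 0 q) 0 = 1 := Finset.prod_range_zero _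
      have h2 : copPos σ u (pad 0 q) 0 = u := rfl
      have h3 : pad 0 q 0 = q 0 := rfl
      rw [h1, h2, h3, one_mul, hq.1]
    · rw [if_neg hq]
      exact zero_le
  calc (∑ q : Fin 1 → V, _) ≤ ∑ q : Fin 1 → V, (if q = (fun _ => v) then (G.dist u v : ℝ≥0∞) else 0) :=
        Finset.sum_le_sum fun q _ => hb q
    _ = (G.dist u v : ℝ≥0∞) := by
        rw [Finset.sum_ite_eq' Finset.univ (fun _ => v) (fun _ => (G.dist u v : ℝ≥0∞))]
        simp

lemma telescope (G : SimpleGraph V) (hconn : G.Connected) {r : ℕ}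
    (hreg : G.IsRegularOfDegree r) (hr : 2 ≤ r) (u v : V) (K : ℕ) :
    2 * (∑ k ∈ Finset.range K, survival G (greedy G u) u v k)
      + (r : ℝ≥0∞) * phi G (greedy G u) u v K ≤ (r : ℝ≥0∞) * phi G (greedy G u) u v 0 := by
  induction K with
  | zero => simp
  | succ K ih =>
    calc 2 * (∑ k ∈ Finset.range (K + 1), survival G (greedy G u) u v k)
          + (r : ℝ≥0∞) * phi G (greedy G u) u v (K + 1)
        = 2 * (∑ k ∈ Finset.range K, survival G (greedy G u) u v k)
          + ((r : ℝ≥0∞) * phi G (greedy G u) u v (K + 1)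
             + 2 * survival G (greedy G u) u v K) := by
          rw [Finset.sum_range_succ]; ring
      _ ≤ 2 * (∑ k ∈ Finset.range K, survival G (greedy G u) u v k)
          + (r : ℝ≥0∞) * phi G (greedy G u) u v K :=
          add_le_add_right (drift G hconn hreg hr u v K) _
      _ ≤ (r : ℝ≥0∞) * phi G (greedy G u) u v 0 := ih

lemma ediam_ne_top' (G : SimpleGraph V) (hconn : G.Connected) : G.ediam ≠ ⊤ := by
  have hb : ∀ a b : V, G.edist a b
      ≤ ((Finset.univ.sup (fun p : V × V => G.dist p.1 p.2) : ℕ) : ℕ∞) := by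
    intro a b
    have h1 : ((G.dist a b : ℕ) : ℕ∞) = G.edist a b :=
      ENat.coe_toNat (SimpleGraph.edist_ne_top_iff_reachable.mpr (hconn a b))
    rw [← h1]
    exact_mod_cast Nat.cast_le.mpr (Finset.le_sup (f := fun p : V × V => G.dist p.1 p.2)
      (Finset.mem_univ (a, b)))
  exact ne_top_of_le_ne_top (ENat.coe_ne_top _) (SimpleGraph.ediam_le_of_edist_le hb)

-- Part 2 lemmas
lemma dist_getVert_le (G : SimpleGraph V) (hconn : G.Connected) {u w : V} (p : G.Walk u w)
    (i : ℕ) : G.dist u (p.getVert i) ≤ i := by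
  induction p generalizing i with
  | nil => rw [SimpleGraph.Walk.getVert_of_length_le _ (Nat.zero_le _)]; simp [SimpleGraph.dist_self]
  | @cons a b c hadj q ih =>
    cases i with
    | zero => simp
    | succ i =>
      rw [SimpleGraph.Walk.getVert_cons_succ]
      have h1 : G.dist a b ≤ 1 := by
        simpa using SimpleGraph.dist_le (SimpleGraph.Walk.cons hadj SimpleGraph.Walk.nil)
      calc G.dist a (q.getVert i) ≤ G.dist a b + G.dist b (q.getVert i) := hconn.dist_triangle
        _ ≤ 1 + i := add_le_add h1 (ih i)
        _ = i + 1 := by ring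

lemma dist_getVert_end_le (G : SimpleGraph V) {u w : V} (p : G.Walk u w) (i : ℕ) :
    G.dist (p.getVert i) w ≤ p.length - i := by
  induction p generalizing i with
  | nil => rw [SimpleGraph.Walk.getVert_of_length_le _ (Nat.zero_le _)]; simp [SimpleGraph.dist_self]
  | @cons a b c hadj q ih =>
    cases i with
    | zero =>
      simpa using SimpleGraph.dist_le (SimpleGraph.Walk.cons hadj q)
    | succ i =>
      rw [SimpleGraph.Walk.getVert_cons_succ]
      simpa [SimpleGraph.Walk.length_cons] using ih i

lemma geodesic_spread (G : SimpleGraph V) (hconn : G.Connected) {u w : V} (p : G.Walk u w)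
    (hp : p.length = G.dist u w) {i j : ℕ} (hij : i ≤ j) (hj : j ≤ p.length) :
    j - i ≤ G.dist (p.getVert i) (p.getVert j) := by
  have t1 : G.dist u (p.getVert i) ≤ i := dist_getVert_le G hconn p i
  have t2 : G.dist (p.getVert j) w ≤ p.length - j := dist_getVert_end_le G p j
  have t3 : G.dist u w ≤ G.dist u (p.getVert i) + G.dist (p.getVert i) (p.getVert j)
      + G.dist (p.getVert j) w :=
    le_trans hconn.dist_triangle (add_le_add_left hconn.dist_triangle _)
  omega

lemma card_bound (G : SimpleGraph V) (hconn : G.Connected) {r : ℕ}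
    (hreg : G.IsRegularOfDegree r) :
    (G.diam / 3 + 1) * (r + 1) ≤ Fintype.card V := by
  have : Nonempty V := hconn.nonempty
  obtain ⟨u₀, v₀, hd⟩ := SimpleGraph.exists_dist_eq_diam (G := G)
  obtain ⟨p, hp⟩ := hconn.exists_walk_length_eq_dist u₀ v₀
  set m := G.diam / 3 with hm
  have hplen : p.length = G.diam := by rw [hp, hd]
  set w : ℕ → V := fun i => p.getVert (3 * i) with hw
  have h3m : ∀ i ≤ m, 3 * i ≤ p.length := by
    intro i hi
    have : 3 * m ≤ G.diam := by omega
    omega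
  have hdist3 : ∀ i j, i < j → j ≤ m → 3 ≤ G.dist (w i) (w j) := by
    intro i j hij hj
    have := geodesic_spread G hconn p hp (i := 3 * i) (j := 3 * j)
      (by omega) (h3m j hj)
    simp only [hw]
    omega
  have hdisj : ∀ i ∈ Finset.range (m + 1), ∀ j ∈ Finset.range (m + 1), i ≠ j →
      Disjoint (insert (w i) (G.neighborFinset (w i)))
        (insert (w j) (G.neighborFinset (w j))) := by
    intro i hi j hj hne
    rw [Finset.mem_range] at hi hj
    rw [Finset.disjoint_left]
    intro x hxi hxj
    have hd1 : ∀ (y : ℕ) (x : V), x ∈ insert (w y) (G.neighborFinset (w y)) →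
        G.dist (w y) x ≤ 1 := by
      intro y x hx
      rcases Finset.mem_insert.mp hx with h | h
      · rw [h, SimpleGraph.dist_self]
        omega
      · have hadj : G.Adj (w y) x := (SimpleGraph.mem_neighborFinset _ _ _).mp h
        exact le_of_eq (SimpleGraph.dist_eq_one_iff_adj.mpr hadj)
    have h2 : G.dist (w i) (w j) ≤ 2 := by
      calc G.dist (w i) (w j) ≤ G.dist (w i) x + G.dist x (w j) := hconn.dist_triangle
        _ ≤ 1 + 1 := add_le_add (hd1 i x hxi)
            (by rw [SimpleGraph.dist_comm]; exact hd1 j x hxj)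
        _ = 2 := rfl
    rcases Nat.lt_or_ge i j with hlt | hge
    · have := hdist3 i j hlt (by omega)
      omega
    · have hlt : j < i := by omega
      have := hdist3 j i hlt (by omega)
      rw [SimpleGraph.dist_comm] at this
      omega
  have hcards : ∀ i : ℕ, (insert (w i) (G.neighborFinset (w i))).card = r + 1 := by
    intro i
    rw [Finset.card_insert_of_notMem (SimpleGraph.notMem_neighborFinset_self _ _),
      SimpleGraph.card_neighborFinset_eq_degree, hreg (w i)]
  have hcardb : ((Finset.range (m + 1)).biUnion
      fun i => insert (w i) (G.neighborFinset (w i))).card = (m + 1) * (r + 1) := by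
    rw [Finset.card_biUnion hdisj]
    rw [Finset.sum_congr rfl fun i _ => hcards i, Finset.sum_const, Finset.card_range,
      smul_eq_mul]
  calc (m + 1) * (r + 1) = _ := hcardb.symm
    _ ≤ Fintype.card V := Finset.card_le_univ _

end CopDrunk


/-- On a connected `r`-regular graph on `n` vertices (`r ≥ 2`), for any starting vertices
`u` (cop) and `v` (robber), some valid cop strategy (the greedy one) has expected capture
time at most `r·diam(G)/2`, and this quantity is strictly less than `3n/2` (using that a
connected `r`-regular graph on `n` vertices has diameter at most `(3n − r − 3)/(r + 1)`). -/
theorem regular_expected_capture_time_le {V : Type} [Fintype V] (G : SimpleGraph V)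
    (n r : ℕ) (hr : 2 ≤ r) (hcard : Fintype.card V = n) (hconn : G.Connected)
    (hreg : G.IsRegularOfDegree r) (u v : V) :
    (∃ σ : List V → V, ValidStrategy G σ u ∧
        expCaptureTime G σ u v ≤ ENNReal.ofReal ((r : ℝ) * (G.diam : ℝ) / 2)) ∧
      (r : ℝ) * (G.diam : ℝ) / 2 < 3 * n / 2 := by
  constructor
  · refine ⟨CopDrunk.greedy G u, ?_, ?_⟩
    · intro rr k
      rw [CopDrunk.copPos_greedy]
      refine CopDrunk.gstep_adj G (fun x => ?_) _ _
      have hdeg : 0 < G.degree x := by rw [hreg x]; omega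
      exact (SimpleGraph.degree_pos_iff_exists_adj G x).mp hdeg
    · have hchain : ∀ K : ℕ,
          2 * (∑ k ∈ Finset.range K, survival G (CopDrunk.greedy G u) u v k)
            ≤ (r : ℝ≥0∞) * (G.diam : ℝ≥0∞) := by
        intro K
        have h1 := CopDrunk.telescope G hconn hreg hr u v K
        have h2 : CopDrunk.phi G (CopDrunk.greedy G u) u v 0 ≤ (G.dist u v : ℝ≥0∞) :=
          CopDrunk.phi_zero_le G (CopDrunk.greedy G u) u v
        have h3 : G.dist u v ≤ G.diam :=
          SimpleGraph.dist_le_diam (CopDrunk.ediam_ne_top' G hconn)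
        calc 2 * (∑ k ∈ Finset.range K, survival G (CopDrunk.greedy G u) u v k)
            ≤ 2 * (∑ k ∈ Finset.range K, survival G (CopDrunk.greedy G u) u v k)
              + (r : ℝ≥0∞) * CopDrunk.phi G (CopDrunk.greedy G u) u v K := le_self_add
          _ ≤ (r : ℝ≥0∞) * CopDrunk.phi G (CopDrunk.greedy G u) u v 0 := h1
          _ ≤ (r : ℝ≥0∞) * (G.dist u v : ℝ≥0∞) := mul_le_mul_right h2 _
          _ ≤ (r : ℝ≥0∞) * (G.diam : ℝ≥0∞) := mul_le_mul_right (Nat.cast_le.mpr h3) _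
      have htsum : 2 * expCaptureTime G (CopDrunk.greedy G u) u v
          ≤ (r : ℝ≥0∞) * (G.diam : ℝ≥0∞) := by
        rw [expCaptureTime, ENNReal.tsum_eq_iSup_nat, ENNReal.mul_iSup]
        exact iSup_le hchain
      have hdiv : expCaptureTime G (CopDrunk.greedy G u) u v
          ≤ ((r : ℝ≥0∞) * (G.diam : ℝ≥0∞)) / 2 :=
        (ENNReal.le_div_iff_mul_le (Or.inl two_ne_zero) (Or.inl ENNReal.ofNat_ne_top)).mpr
          (by rw [mul_comm]; exact htsum)
      have heq : ENNReal.ofReal ((r : ℝ) * (G.diam : ℝ) / 2)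
          = ((r : ℝ≥0∞) * (G.diam : ℝ≥0∞)) / 2 := by
        rw [ENNReal.ofReal_div_of_pos (by norm_num : (0 : ℝ) < 2)]
        congr 1
        · rw [show (r : ℝ) * (G.diam : ℝ) = ((r * G.diam : ℕ) : ℝ) by push_cast; ring,
            ENNReal.ofReal_natCast]
          push_cast
          ring
        · norm_num
      rw [heq]
      exact hdiv
  · have hkey : r * G.diam < 3 * n := by
      have h1 := CopDrunk.card_bound G hconn hreg
      rw [hcard] at h1
      have h2 : G.diam + 1 ≤ 3 * (G.diam / 3 + 1) := by omega
      have h3 : (G.diam + 1) * (r + 1) ≤ 3 * ((G.diam / 3 + 1) * (r + 1)) :=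
        le_trans (Nat.mul_le_mul_right _ h2) (le_of_eq (by ring))
      have h4 : r * G.diam < (G.diam + 1) * (r + 1) := by nlinarith
      have h5 : 3 * ((G.diam / 3 + 1) * (r + 1)) ≤ 3 * n := Nat.mul_le_mul_left 3 h1
      exact lt_of_lt_of_le h4 (le_trans h3 h5)
    have hR : (r : ℝ) * (G.diam : ℝ) < 3 * (n : ℝ) := by exact_mod_cast hkey
    linarith
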